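/- Let A be a bounded (continuous) linear operator on 𝔅 with A ≠ 0. Then for arbitrary initial data y_0,…,y_{m−1} ∈ 𝔅, the function y(z) = Σ_{k=0}^{m−1} Σ_{n≥0} z^{mn+k} A^n y_k/(mn+k)! converges for |z|_p < ‖A‖^{−1/m} p^{−1/(p−1)}, satisfies y^{(m)}(z) = A y(z) there together with y^{(k)}(0) = y_k (k = 0,…,m−1), and is the unique solution of this Cauchy problem in 𝔄_loc(𝔅). -/

import Mathlib

open Filter Topology

/-!
STATEMENT 8 (bounded operator). `ℂ_[p]` is axiomatized as a complete, algebraically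
closed, nonarchimedean nontrivially normed field `K` with an isometric `ℚ_[p]`-algebra
structure.  Here `A : B →L[K] B` is a bounded (continuous) linear operator (so the
domain is all of `B`, encoded as the submodule `⊤`).  The solution
`y(z) = Σ_{k<m} Σ_n z^{mn+k} Aⁿ y_k/(mn+k)!` is encoded through its combined
coefficient sequence `c`, with `c (m*n+k) = Aⁿ y_k/(m*n+k)!` for `k < m`.
-/

/-- `y(z) = Σ cⱼ zʲ` is a solution in `𝔄_loc(𝔅)` of the Cauchy problem
`y⁽ᵐ⁾ = A y`, `y⁽ᵏ⁾(0) = yinit k` (`k = 0, …, m-1`), on the disk `‖z‖ < r`. -/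
def IsCauchySolution {K : Type*} [NontriviallyNormedField K]
    {B : Type*} [NormedAddCommGroup B] [NormedSpace K B]
    (D : Submodule K B) (A : B →ₗ[K] B) (m : ℕ) (yinit : ℕ → B)
    (y : K → B) (c : ℕ → B) (r : ℝ) : Prop :=
  0 < r ∧
  Filter.Tendsto (fun j : ℕ => ‖c j‖ * r ^ j) Filter.atTop (nhds 0) ∧
  (∀ z : K, ‖z‖ < r → HasSum (fun j : ℕ => z ^ j • c j) (y z)) ∧
  (∀ z : K, ‖z‖ < r → y z ∈ D) ∧
  (∀ i < m, ∀ z : K, ‖z‖ < r → DifferentiableAt K (iteratedDeriv i y) z) ∧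
  (∀ z : K, ‖z‖ < r → iteratedDeriv m y z = A (y z)) ∧
  (∀ k < m, iteratedDeriv k y 0 = yinit k ∧ (k.factorial : K) • c k = yinit k)

namespace CauchyAux

open scoped NNReal ENNReal

variable {K : Type*} [NontriviallyNormedField K]
    {B : Type*} [NormedAddCommGroup B] [NormedSpace K B]

noncomputable def pser (c : ℕ → B) : FormalMultilinearSeries K K B :=
  fun n => ContinuousMultilinearMap.mkPiRing K (Fin n) (c n)

lemma pser_apply (c : ℕ → B) (n : ℕ) (z : K) :
    (pser c n) (fun _ => z) = z ^ n • c n := by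
  simp [pser, ContinuousMultilinearMap.mkPiRing_apply]

lemma norm_pser (c : ℕ → B) (n : ℕ) : ‖(pser (K := K) c) n‖ = ‖c n‖ :=
  ContinuousMultilinearMap.norm_mkPiRing ..

lemma coeff_pser (c : ℕ → B) (n : ℕ) : (pser (K := K) c).coeff n = c n := by
  show (pser c) n (fun _ => 1) = c n
  rw [pser_apply]; simp

lemma series_ext {p q : FormalMultilinearSeries K K B}
    (h : ∀ n, p.coeff n = q.coeff n) : p = q :=
  FormalMultilinearSeries.ext fun n => by
    rw [← p.mkPiRing_coeff_eq, ← q.mkPiRing_coeff_eq, h]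

lemma comp_pser (L : B →L[K] B) (c : ℕ → B) :
    L.compFormalMultilinearSeries (pser c) = pser (fun n => L (c n)) := by
  refine series_ext fun n => ?_
  rw [coeff_pser]
  show L ((pser c) n (fun _ => 1)) = L (c n)
  rw [pser_apply]; simp

/-- coefficient step operation corresponding to `deriv`. -/
def dstep (e : ℕ → B) : ℕ → B := fun n => (n + 1) • e (n + 1)

lemma deriv_step [CompleteSpace B] {g : K → B} {e : ℕ → B} {ρ : ℝ≥0∞}
    (h : HasFPowerSeriesOnBall g (pser e) 0 ρ) :
    HasFPowerSeriesOnBall (deriv g) (pser (dstep e)) 0 ρ := by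
  have h1 := (ContinuousLinearMap.apply K B (1 : K)).comp_hasFPowerSeriesOnBall h.fderiv
  have hfun : (ContinuousLinearMap.apply K B (1 : K)) ∘ (fderiv K g) = deriv g := by
    funext z
    simp [Function.comp, ContinuousLinearMap.apply_apply, fderiv_apply_one_eq_deriv]
  have hser : (ContinuousLinearMap.apply K B (1 : K)).compFormalMultilinearSeries
      (pser e).derivSeries = pser (dstep e) := by
    refine series_ext fun n => ?_
    rw [coeff_pser]
    show ((pser e).derivSeries n (fun _ => (1 : K))) 1 = dstep e n
    rw [FormalMultilinearSeries.derivSeries_apply_diag, pser_apply, dstep]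
    simp
  rw [hfun, hser] at h1
  exact h1

lemma iter_deriv_series [CompleteSpace B] {g : K → B} {e : ℕ → B} {ρ : ℝ≥0∞}
    (h : HasFPowerSeriesOnBall g (pser e) 0 ρ) (i : ℕ) :
    HasFPowerSeriesOnBall (iteratedDeriv i g) (pser (dstep^[i] e)) 0 ρ := by
  induction i with
  | zero => simpa [iteratedDeriv_zero] using h
  | succ i ih =>
      rw [iteratedDeriv_succ, Function.iterate_succ_apply']
      exact deriv_step ih

lemma dstep_iter (i : ℕ) (e : ℕ → B) (j : ℕ) :
    dstep^[i] e j = ((j + i).factorial / j.factorial) • e (j + i) := by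
  induction i generalizing e with
  | zero => simp [Nat.div_self (Nat.factorial_pos j)]
  | succ i ih =>
      rw [Function.iterate_succ_apply, ih (dstep e), dstep]
      rw [smul_smul]
      congr 1
      rw [mul_comm, ← Nat.mul_div_assoc _ (Nat.factorial_dvd_factorial (Nat.le_add_right j i)),
        show j + (i + 1) = (j + i) + 1 by ring, Nat.factorial_succ]

lemma mem_ball_ofReal {z : K} {r : ℝ} :
    z ∈ Metric.eball (0 : K) (ENNReal.ofReal r) ↔ ‖z‖ < r := by
  rw [mem_emetric_ball_zero_iff, enorm_eq_nnnorm, ENNReal.lt_ofReal_iff_toReal_lt ENNReal.coe_ne_top]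
  simp

lemma summable_of_norm_tendsto [CompleteSpace B] [IsUltrametricDist B] {f : ℕ → B}
    (h : Tendsto (fun n => ‖f n‖) atTop (𝓝 0)) : Summable f := by
  apply NonarchimedeanAddGroup.summable_of_tendsto_cofinite_zero
  rw [Nat.cofinite_eq_atTop]
  exact tendsto_zero_iff_norm_tendsto_zero.2 h

lemma hasFPSOB_of_tendsto [CompleteSpace B] {c : ℕ → B} {y : K → B} {R : ℝ} (hR : 0 < R)
    (ht : ∀ r : ℝ, 0 ≤ r → r < R → Tendsto (fun j => ‖c j‖ * r ^ j) atTop (𝓝 0))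
    (hy : ∀ z : K, ‖z‖ < R → HasSum (fun j => z ^ j • c j) (y z)) :
    HasFPowerSeriesOnBall y (pser c) 0 (ENNReal.ofReal R) where
  r_le := by
    apply ENNReal.le_of_forall_nnreal_lt
    intro r hr
    have hrR : (r : ℝ) < R := by
      rw [ENNReal.lt_ofReal_iff_toReal_lt ENNReal.coe_ne_top] at hr
      simpa using hr
    exact (pser (K := K) c).le_radius_of_tendsto
      (by simpa [norm_pser, coeff_pser] using ht r r.2 hrR)
  r_pos := by simp [ENNReal.ofReal_pos, hR]
  hasSum := by
    intro z hz
    rw [zero_add]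
    have := hy z (mem_ball_ofReal.1 hz)
    simpa [pser_apply, coeff_pser] using this

/-- p-adic estimate for the norm of a factorial. -/
lemma pow_le_norm_factorial {p : ℕ} [hp : Fact p.Prime] {K : Type*}
    [NontriviallyNormedField K] [Algebra ℚ_[p] K]
    (hK : ∀ q : ℚ_[p], ‖algebraMap ℚ_[p] K q‖ = ‖q‖) (n : ℕ) :
    ((p : ℝ) ^ (-(1 : ℝ) / ((p : ℝ) - 1))) ^ n ≤ ‖((n.factorial : K))‖ := by
  have hp1 : (1 : ℝ) < p := by exact_mod_cast hp.out.one_lt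
  have hp0 : (0 : ℝ) < p := by linarith
  have hfK : ((n.factorial : K)) = algebraMap ℚ_[p] K ((n.factorial : ℚ_[p])) :=
    (map_natCast (algebraMap ℚ_[p] K) n.factorial).symm
  rw [hfK, hK]
  have hne : ((n.factorial : ℚ_[p])) ≠ 0 := by
    exact_mod_cast n.factorial_ne_zero
  rw [Padic.norm_eq_zpow_neg_valuation hne, Padic.valuation_natCast]
  set v : ℕ := padicValNat p n.factorial with hv
  have hleg : (p - 1) * v ≤ n := by
    rw [hv, sub_one_mul_padicValNat_factorial]
    exact Nat.sub_le _ _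
  have hp2 : 2 ≤ p := hp.out.two_le
  have hlegR : ((p : ℝ) - 1) * v ≤ n := by
    have : (((p - 1) * v : ℕ) : ℝ) ≤ (n : ℝ) := by exact_mod_cast hleg
    rwa [Nat.cast_mul, Nat.cast_sub (by omega), Nat.cast_one] at this
  have hvle : (v : ℝ) ≤ (n : ℝ) / ((p : ℝ) - 1) := by
    rw [le_div_iff₀ (by linarith)]
    linarith [hlegR]
  rw [← Real.rpow_natCast ((p : ℝ) ^ (-(1 : ℝ) / ((p : ℝ) - 1))) n,
    ← Real.rpow_mul hp0.le]
  rw [show ((p : ℝ) ^ (-(v : ℤ)) : ℝ) = (p : ℝ) ^ ((-(v : ℤ) : ℤ) : ℝ) from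
    (Real.rpow_intCast _ _).symm]
  apply (Real.rpow_le_rpow_left_iff hp1).2
  push_cast
  rw [show -(1 : ℝ) / ((p : ℝ) - 1) * n = -((n : ℝ) / ((p : ℝ) - 1)) by ring]
  linarith [hvle]

lemma norm_iterate_apply_le (A : B →L[K] B) (x : B) (n : ℕ) :
    ‖(⇑A)^[n] x‖ ≤ ‖A‖ ^ n * ‖x‖ := by
  induction n with
  | zero => simp
  | succ n ih =>
      rw [Function.iterate_succ_apply']
      calc ‖A ((⇑A)^[n] x)‖ ≤ ‖A‖ * ‖(⇑A)^[n] x‖ := A.le_opNorm _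
        _ ≤ ‖A‖ * (‖A‖ ^ n * ‖x‖) := by
            exact mul_le_mul_of_nonneg_left ih (norm_nonneg _)
        _ = ‖A‖ ^ (n + 1) * ‖x‖ := by ring

end CauchyAux

lemma smul_cancel {K : Type*} [NontriviallyNormedField K] {B : Type*}
    [NormedAddCommGroup B] [NormedSpace K B]
    {a : K} (ha : a ≠ 0) {x y : B} (h : a • x = a • y) : x = y := by
  have := congrArg (fun v => a⁻¹ • v) h
  simpa [smul_smul, inv_mul_cancel₀ ha] using this

theorem bounded_operator_wellposed
    {p : ℕ} [Fact p.Prime]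
    {K : Type*} [NontriviallyNormedField K] [CompleteSpace K] [IsAlgClosed K]
    [IsUltrametricDist K] [Algebra ℚ_[p] K]
    (hK : ∀ q : ℚ_[p], ‖algebraMap ℚ_[p] K q‖ = ‖q‖)
    {B : Type*} [NormedAddCommGroup B] [NormedSpace K B] [CompleteSpace B]
    [IsUltrametricDist B]
    (A : B →L[K] B) (hA0 : A ≠ 0)
    (m : ℕ) (hm : 1 ≤ m) (yinit : ℕ → B)
    (c : ℕ → B)
    (hc : ∀ (n : ℕ), ∀ k < m,
      c (m * n + k) = ((m * n + k).factorial : K)⁻¹ • (⇑A)^[n] (yinit k))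
    (y : K → B) (hy : ∀ z : K, y z = ∑' j : ℕ, z ^ j • c j)
    (R : ℝ) (hR : R = ‖A‖ ^ (-(1 : ℝ) / (m : ℝ)) * (p : ℝ) ^ (-(1 : ℝ) / ((p : ℝ) - 1))) :
    (∀ z : K, ‖z‖ < R → Summable (fun j : ℕ => z ^ j • c j)) ∧
    (∀ z : K, ‖z‖ < R → iteratedDeriv m y z = A (y z)) ∧
    (∀ k < m, iteratedDeriv k y 0 = yinit k) ∧
    (∀ r : ℝ, 0 < r → r < R →
      IsCauchySolution (⊤ : Submodule K B) (A : B →ₗ[K] B) m yinit y c r) ∧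
    (∀ (y' : K → B) (c' : ℕ → B) (r' : ℝ),
      IsCauchySolution (⊤ : Submodule K B) (A : B →ₗ[K] B) m yinit y' c' r' →
        ∀ j : ℕ, c' j = c j) := by
  classical
  haveI : CharZero K := charZero_of_injective_algebraMap (algebraMap ℚ_[p] K).injective
  have hm0 : 0 < m := hm
  have hA : 0 < ‖A‖ := by
    rcases (norm_nonneg A).lt_or_eq with h | h
    · exact h
    · exact absurd ((ContinuousLinearMap.opNorm_zero_iff A).1 h.symm) hA0
  set Y : ℝ := (p : ℝ) ^ (-(1 : ℝ) / ((p : ℝ) - 1)) with hYdef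
  set Am : ℝ := ‖A‖ ^ (-(1 : ℝ) / (m : ℝ)) with hAmdef
  have hpR : (0 : ℝ) < p := by exact_mod_cast (Fact.out : p.Prime).pos
  have hY : 0 < Y := Real.rpow_pos_of_pos hpR _
  have hAm : 0 < Am := Real.rpow_pos_of_pos hA _
  have hRY : R = Am * Y := hR
  have hR0 : 0 < R := by rw [hRY]; positivity
  set C : ℝ := (Finset.range m).sup' (Finset.nonempty_range_iff.2 (by omega))
    (fun k => ‖yinit k‖) with hCdef
  have hCk : ∀ k, k < m → ‖yinit k‖ ≤ C := by
    intro k hk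
    rw [hCdef]
    exact Finset.le_sup' (fun k => ‖yinit k‖) (Finset.mem_range.2 hk)
  have hC0 : 0 ≤ C := le_trans (norm_nonneg (yinit 0)) (hCk 0 hm0)
  set C2 : ℝ := max 1 ‖A‖⁻¹ with hC2def
  have hC2 : 0 < C2 := lt_of_lt_of_le one_pos (le_max_left _ _)
  have hfacne : ∀ j : ℕ, ((j.factorial : K)) ≠ 0 := fun j =>
    Nat.cast_ne_zero.2 j.factorial_ne_zero
  have hYfact : ∀ j : ℕ, Y ^ j ≤ ‖((j.factorial : K))‖ := fun j =>
    CauchyAux.pow_le_norm_factorial hK j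
  have hdecomp : ∀ j : ℕ, m * (j / m) + j % m = j := fun j => Nat.div_add_mod j m
  have hmod : ∀ j : ℕ, j % m < m := fun j => Nat.mod_lt _ hm0
  -- norm bound on coefficients
  have hnormc : ∀ j : ℕ, ‖c j‖ ≤ ‖((j.factorial : K))‖⁻¹ * (‖A‖ ^ (j / m) * C) := by
    intro j
    have hk := hmod j
    have h1 := hc (j / m) (j % m) hk
    rw [hdecomp j] at h1
    rw [h1, norm_smul, norm_inv]
    apply mul_le_mul_of_nonneg_left _ (inv_nonneg.2 (norm_nonneg _))
    calc ‖(⇑A)^[j / m] (yinit (j % m))‖ ≤ ‖A‖ ^ (j / m) * ‖yinit (j % m)‖ :=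
          CauchyAux.norm_iterate_apply_le ..
      _ ≤ ‖A‖ ^ (j / m) * C := mul_le_mul_of_nonneg_left (hCk _ hk) (by positivity)
  -- rpow bound
  have hAmpow : ∀ j : ℕ, Am ^ j * ‖A‖ ^ (j / m) ≤ C2 := by
    intro j
    have hkm : (0 : ℝ) ≤ ((j % m : ℕ) : ℝ) / (m : ℝ) := by positivity
    have hm1 : (0 : ℝ) < (m : ℝ) := by exact_mod_cast hm0
    have hkm1 : ((j % m : ℕ) : ℝ) / (m : ℝ) ≤ 1 := by
      rw [div_le_one hm1]
      exact_mod_cast (hmod j).le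
    have heq : Am ^ j * ‖A‖ ^ (j / m) = ‖A‖ ^ (-(((j % m : ℕ) : ℝ)) / (m : ℝ)) := by
      rw [hAmdef, ← Real.rpow_natCast (‖A‖ ^ (-(1 : ℝ) / (m : ℝ))) j,
        ← Real.rpow_mul (norm_nonneg _), ← Real.rpow_natCast ‖A‖ (j / m),
        ← Real.rpow_add hA]
      congr 1
      have hjj : (j : ℝ) = (m : ℝ) * ((j / m : ℕ) : ℝ) + ((j % m : ℕ) : ℝ) := by
        exact_mod_cast (hdecomp j).symm
      field_simp
      linarith [hjj]
    rw [heq]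
    rcases le_or_gt 1 ‖A‖ with h1 | h1
    · refine le_trans (Real.rpow_le_one_of_one_le_of_nonpos h1 ?_) (le_max_left _ _)
      rw [neg_div]
      exact neg_nonpos.2 hkm
    · have hb : (-1 : ℝ) ≤ -(((j % m : ℕ) : ℝ)) / (m : ℝ) := by
        rw [neg_div]; linarith [hkm1]
      calc ‖A‖ ^ (-(((j % m : ℕ) : ℝ)) / (m : ℝ)) ≤ ‖A‖ ^ (-1 : ℝ) :=
            Real.rpow_le_rpow_of_exponent_ge hA h1.le hb
        _ = ‖A‖⁻¹ := Real.rpow_neg_one _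
        _ ≤ C2 := le_max_right _ _
  -- master decay estimate
  have htend : ∀ r : ℝ, 0 ≤ r → r < R →
      Filter.Tendsto (fun j : ℕ => ‖c j‖ * r ^ j) Filter.atTop (nhds 0) := by
    intro r hr0 hrR
    set t : ℝ := r / R with htdef
    have ht0 : 0 ≤ t := div_nonneg hr0 hR0.le
    have ht1 : t < 1 := (div_lt_one hR0).2 hrR
    have hrt : r = t * (Am * Y) := by rw [htdef, hRY]; field_simp
    have key : ∀ j : ℕ, ‖c j‖ * r ^ j ≤ (C * C2) * t ^ j := by
      intro j
      have e1 : r ^ j = t ^ j * (Am ^ j * Y ^ j) := by rw [hrt, mul_pow, mul_pow]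
      have hninv : ‖((j.factorial : K))‖⁻¹ * ‖((j.factorial : K))‖ = 1 :=
        inv_mul_cancel₀ (norm_ne_zero_iff.2 (hfacne j))
      calc ‖c j‖ * r ^ j
          ≤ (‖((j.factorial : K))‖⁻¹ * (‖A‖ ^ (j / m) * C)) *
            (t ^ j * (Am ^ j * Y ^ j)) := by
            rw [e1]; exact mul_le_mul_of_nonneg_right (hnormc j) (by positivity)
        _ ≤ (‖((j.factorial : K))‖⁻¹ * (‖A‖ ^ (j / m) * C)) *
            (t ^ j * (Am ^ j * ‖((j.factorial : K))‖)) := by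
            gcongr
            exact hYfact j
        _ = (‖((j.factorial : K))‖⁻¹ * ‖((j.factorial : K))‖) *
            ((Am ^ j * ‖A‖ ^ (j / m)) * (C * t ^ j)) := by ring
        _ = (Am ^ j * ‖A‖ ^ (j / m)) * (C * t ^ j) := by rw [hninv, one_mul]
        _ ≤ C2 * (C * t ^ j) := mul_le_mul_of_nonneg_right (hAmpow j) (by positivity)
        _ = (C * C2) * t ^ j := by ring
    refine squeeze_zero (fun j => by positivity) key ?_
    have := (tendsto_pow_atTop_nhds_zero_of_lt_one ht0 ht1).const_mul (C * C2)
    simpa using this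
  -- summability and sums
  have hS : ∀ z : K, ‖z‖ < R → Summable (fun j : ℕ => z ^ j • c j) := by
    intro z hz
    apply CauchyAux.summable_of_norm_tendsto
    have h := htend ‖z‖ (norm_nonneg z) hz
    have hee : (fun j : ℕ => ‖z ^ j • c j‖) = fun j => ‖c j‖ * ‖z‖ ^ j := by
      funext j; rw [norm_smul, norm_pow, mul_comm]
    rw [hee]; exact h
  have hHasSum : ∀ z : K, ‖z‖ < R → HasSum (fun j : ℕ => z ^ j • c j) (y z) := by
    intro z hz
    rw [hy z]
    exact (hS z hz).hasSum
  have hball : HasFPowerSeriesOnBall y (CauchyAux.pser c) 0 (ENNReal.ofReal R) :=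
    CauchyAux.hasFPSOB_of_tendsto hR0 htend hHasSum
  -- recursion for c
  have hCK : ∀ j : ℕ, ((j.factorial : K)) * ((((j + m).factorial / j.factorial : ℕ)) : K)
      = (((j + m).factorial : K)) := by
    intro j
    rw [← Nat.cast_mul, Nat.mul_div_cancel' (Nat.factorial_dvd_factorial (Nat.le_add_right j m))]
  have hscal : ∀ j : ℕ, ((((j + m).factorial / j.factorial : ℕ)) : K) *
      (((j + m).factorial : K))⁻¹ = ((j.factorial : K))⁻¹ := by
    intro j
    have h := hCK j
    field_simp [hfacne j, hfacne (j + m)]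
    linear_combination h
  have hrec : ∀ j : ℕ, (((j + m).factorial / j.factorial) : ℕ) • c (j + m) = A (c j) := by
    intro j
    set n := j / m with hn
    set k := j % m with hkdef
    have hk : k < m := hmod j
    have hj1 : m * n + k = j := hdecomp j
    have h1 := hc n k hk
    have h2 := hc (n + 1) k hk
    rw [hj1] at h1
    rw [show m * (n + 1) + k = j + m by rw [Nat.mul_succ]; omega] at h2
    rw [h1, h2, map_smul, ← Nat.cast_smul_eq_nsmul K, smul_smul, hscal j,
      Function.iterate_succ_apply']
  have hdm : CauchyAux.dstep^[m] c = fun j => A (c j) := by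
    funext j
    rw [CauchyAux.dstep_iter, hrec j]
  have hmser : HasFPowerSeriesOnBall (iteratedDeriv m y)
      (CauchyAux.pser (fun j => A (c j))) 0 (ENNReal.ofReal R) := by
    have h := CauchyAux.iter_deriv_series hball m
    rwa [hdm] at h
  have hAser : HasFPowerSeriesOnBall (⇑A ∘ y)
      (CauchyAux.pser (fun j => A (c j))) 0 (ENNReal.ofReal R) := by
    have h := A.comp_hasFPowerSeriesOnBall hball
    rwa [CauchyAux.comp_pser] at h
  have hmain : ∀ z : K, ‖z‖ < R → iteratedDeriv m y z = A (y z) := by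
    intro z hz
    have hz' : z ∈ Metric.eball (0 : K) (ENNReal.ofReal R) := CauchyAux.mem_ball_ofReal.2 hz
    have h1 := hmser.hasSum hz'
    have h2 := hAser.hasSum hz'
    rw [zero_add] at h1 h2
    exact h1.unique h2
  -- initial conditions
  have hck : ∀ k, k < m → ((k.factorial : K)) • c k = yinit k := by
    intro k hk
    have h1 := hc 0 k hk
    rw [show m * 0 + k = k by ring] at h1
    rw [h1, smul_smul, mul_inv_cancel₀ (hfacne k), one_smul]
    simp
  have hinit : ∀ k, k < m → iteratedDeriv k y 0 = yinit k := by
    intro k hk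
    rw [iteratedDeriv_eq_iteratedFDeriv, ← hball.factorial_smul (1 : K) k,
      CauchyAux.pser_apply]
    simp only [one_pow, one_smul]
    rw [← Nat.cast_smul_eq_nsmul K]
    exact hck k hk
  -- solutions for each r < R
  have hsol : ∀ r : ℝ, 0 < r → r < R →
      IsCauchySolution (⊤ : Submodule K B) (A : B →ₗ[K] B) m yinit y c r := by
    intro r hr0 hrR
    refine ⟨hr0, htend r hr0.le hrR, fun z hz => hHasSum z (hz.trans hrR),
      fun _ _ => trivial, ?_, fun z hz => hmain z (hz.trans hrR),
      fun k hk => ⟨hinit k hk, hck k hk⟩⟩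
    intro i _ z hz
    have hz' : z ∈ Metric.eball (0 : K) (ENNReal.ofReal R) :=
      CauchyAux.mem_ball_ofReal.2 (hz.trans hrR)
    exact ((CauchyAux.iter_deriv_series hball i).analyticAt_of_mem hz').differentiableAt
  -- uniqueness
  have hNne : ∀ j : ℕ, ((((j + m).factorial / j.factorial : ℕ)) : K) ≠ 0 := by
    intro j
    have hpos : 0 < (j + m).factorial / j.factorial :=
      Nat.div_pos (Nat.factorial_le (Nat.le_add_right j m)) j.factorial_pos
    exact_mod_cast hpos.ne'
  have huniq : ∀ (y' : K → B) (c' : ℕ → B) (r' : ℝ),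
      IsCauchySolution (⊤ : Submodule K B) (A : B →ₗ[K] B) m yinit y' c' r' →
        ∀ j : ℕ, c' j = c j := by
    rintro y' c' r' ⟨hr0, htend', hsum', -, -, hder', hinit'⟩
    have htendall : ∀ ρ : ℝ, 0 ≤ ρ → ρ < r' →
        Filter.Tendsto (fun j : ℕ => ‖c' j‖ * ρ ^ j) Filter.atTop (nhds 0) := by
      intro ρ h0 hlt
      refine squeeze_zero (fun j => by positivity) (fun j => ?_) htend'
      exact mul_le_mul_of_nonneg_left (pow_le_pow_left₀ h0 hlt.le j) (norm_nonneg _)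
    have hball' : HasFPowerSeriesOnBall y' (CauchyAux.pser c') 0 (ENNReal.ofReal r') :=
      CauchyAux.hasFPSOB_of_tendsto hr0 htendall hsum'
    have hms := CauchyAux.iter_deriv_series hball' m
    have hAs : HasFPowerSeriesOnBall (⇑A ∘ y')
        (CauchyAux.pser (fun j => A (c' j))) 0 (ENNReal.ofReal r') := by
      have h := A.comp_hasFPowerSeriesOnBall hball'
      rwa [CauchyAux.comp_pser] at h
    have hcongr : iteratedDeriv m y' =ᶠ[nhds (0 : K)] (⇑A ∘ y') := by
      have hmem : Metric.ball (0 : K) r' ∈ nhds (0 : K) := Metric.ball_mem_nhds _ hr0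
      filter_upwards [hmem] with z hz
      have hzr : ‖z‖ < r' := by simpa [Metric.mem_ball, dist_zero_right] using hz
      exact hder' z hzr
    have heq : CauchyAux.pser (CauchyAux.dstep^[m] c') =
        CauchyAux.pser (fun j => A (c' j)) :=
      (hms.hasFPowerSeriesAt.congr hcongr).eq_formalMultilinearSeries hAs.hasFPowerSeriesAt
    have hrec' : ∀ j : ℕ, (((j + m).factorial / j.factorial) : ℕ) • c' (j + m) = A (c' j) := by
      intro j
      have h := congrArg (fun q : FormalMultilinearSeries K K B =>
        FormalMultilinearSeries.coeff q j) heq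
      simpa [CauchyAux.coeff_pser, CauchyAux.dstep_iter] using h
    have hstep : ∀ n : ℕ, ∀ k, k < m → c' (m * n + k) = c (m * n + k) := by
      intro n
      induction n with
      | zero =>
          intro k hk
          have h0 : (k.factorial : K) • c' k = yinit k := (hinit' k hk).2
          have h1 := hck k hk
          have h2 : (k.factorial : K) • c' k = (k.factorial : K) • c k := h0.trans h1.symm
          have h3 := smul_cancel (hfacne k) h2
          simpa using h3
      | succ n ih =>
          intro k hk
          have hj : m * (n + 1) + k = (m * n + k) + m := by ring
          rw [hj]
          have e1 := hrec' (m * n + k)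
          have e2 := hrec (m * n + k)
          rw [ih k hk] at e1
          have h2 : ((((m * n + k + m).factorial / (m * n + k).factorial : ℕ)) : K) •
              c' (m * n + k + m) =
              ((((m * n + k + m).factorial / (m * n + k).factorial : ℕ)) : K) •
              c (m * n + k + m) := by
            rw [Nat.cast_smul_eq_nsmul, Nat.cast_smul_eq_nsmul, e1, e2]
          exact smul_cancel (hNne (m * n + k)) h2
    intro j
    have h := hstep (j / m) (j % m) (hmod j)
    rwa [hdecomp j] at h
  exact ⟨hS, hmain, hinit, hsol, huniq⟩
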